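/- Let (ρ,η) ∈ X with ρ, η bounded, and suppose there exist disjoint measurable sets B₁ ⊂ supp(ρ), B₂ ⊂ supp(η), B₃ ⊂ Ω∖(supp(ρ)∪supp(η)) of equal positive measure and α > 0 with ρ > α a.e. on B₁ and η > α a.e. on B₂. Define ρᵋ = ρ − ε1_{B₁} + ε1_{B₃}, ηᵋ = η − ε1_{B₂} + ε1_{B₃} for 0 < ε < α. Then with F(ρ,η) = (1/2)∫_Ω(ρ+η)² dx: F(ρᵋ,ηᵋ) = F(ρ,η) − ε(∫_{B₁}(ρ+η) dx + ∫_{B₂}(ρ+η) dx) + 3ε²|B₃|, and for ε small enough F(ρᵋ,ηᵋ) < F(ρ,η). Consequently any minimiser of F over X satisfies supp(ρ) ∪ supp(η) = Ω up to a null set. -/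

import Mathlib

open MeasureTheory

/-- The symmetric (δ = 0) local energy `F(ρ,η) = (1/2)∫_Ω (ρ+η)²`. -/
noncomputable def F0 (Ω : Set ℝ) (ρ η : ℝ → ℝ) : ℝ :=
  (1/2) * ∫ x in Ω, (ρ x + η x)^2

/-- The admissible set X: nonnegative L² densities with prescribed masses. -/
def InX (Ω : Set ℝ) (m₁ m₂ : ℝ) (ρ η : ℝ → ℝ) : Prop :=
  MemLp ρ 2 (volume.restrict Ω) ∧ MemLp η 2 (volume.restrict Ω) ∧
  (∀ᵐ x ∂(volume.restrict Ω), 0 ≤ ρ x) ∧ (∀ᵐ x ∂(volume.restrict Ω), 0 ≤ η x) ∧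
  (∫ x in Ω, ρ x) = m₁ ∧ (∫ x in Ω, η x) = m₂

set_option maxHeartbeats 1000000

open Set
open scoped ENNReal NNReal

lemma finite_restrict (a b : ℝ) : IsFiniteMeasure (volume.restrict (Set.Ioo a b)) := by
  constructor
  rw [Measure.restrict_apply_univ]
  simp [Real.volume_Ioo]

lemma vol_Ioo_lt_top (a b : ℝ) : volume (Set.Ioo a b) < ⊤ := by
  simp [Real.volume_Ioo]

/-- Exact-measure subsets of bounded measurable sets in ℝ. -/
lemma exists_subset_volume_eq {a b : ℝ} {S : Set ℝ} (hS : MeasurableSet S)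
    (hSb : S ⊆ Set.Ioo a b) (hab : a ≤ b) {r : ℝ≥0∞} (hr : r ≤ volume S) :
    ∃ T, T ⊆ S ∧ MeasurableSet T ∧ volume T = r := by
  have hfin : volume S ≠ ⊤ :=
    ne_top_of_le_ne_top (vol_Ioo_lt_top a b).ne (measure_mono hSb)
  set g : ℝ → ℝ := fun t => (volume (S ∩ Set.Iio t)).toReal with hgdef
  have hfin' : ∀ t, volume (S ∩ Set.Iio t) ≠ ⊤ := fun t =>
    ne_top_of_le_ne_top hfin (measure_mono Set.inter_subset_left)
  have hmono : Monotone g := fun u t hut =>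
    ENNReal.toReal_mono (hfin' t) (measure_mono (Set.inter_subset_inter_right _ (Set.Iio_subset_Iio hut)))
  have hstep : ∀ u t : ℝ, u ≤ t → g t ≤ g u + (t - u) := by
    intro u t hut
    have hsub : S ∩ Set.Iio t ⊆ (S ∩ Set.Iio u) ∪ Set.Ico u t := by
      rintro x ⟨hxS, hxt⟩
      by_cases hxu : x < u
      · exact Or.inl ⟨hxS, hxu⟩
      · exact Or.inr ⟨not_lt.1 hxu, hxt⟩
    have h1 : volume (S ∩ Set.Iio t) ≤ volume (S ∩ Set.Iio u) + volume (Set.Ico u t) :=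
      (measure_mono hsub).trans (measure_union_le _ _)
    have h2 : g t ≤ (volume (S ∩ Set.Iio u) + volume (Set.Ico u t)).toReal := by
      apply ENNReal.toReal_mono _ h1
      exact ENNReal.add_ne_top.2 ⟨hfin' u, by simp [Real.volume_Ico]⟩
    calc g t ≤ (volume (S ∩ Set.Iio u) + volume (Set.Ico u t)).toReal := h2
      _ = g u + (t - u) := by
          rw [ENNReal.toReal_add (hfin' u) (by simp [Real.volume_Ico]), Real.volume_Ico,
            ENNReal.toReal_ofReal (by linarith)]
  have hlip : LipschitzWith 1 g := by
    apply LipschitzWith.of_dist_le_mul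
    intro u t
    rw [Real.dist_eq, Real.dist_eq, NNReal.coe_one, one_mul]
    rcases le_total u t with h | h
    · rw [abs_sub_comm, abs_of_nonneg (sub_nonneg.2 (hmono h)), abs_sub_comm,
        abs_of_nonneg (sub_nonneg.2 h)]
      linarith [hstep u t h]
    · rw [abs_of_nonneg (sub_nonneg.2 (hmono h)), abs_of_nonneg (sub_nonneg.2 h)]
      linarith [hstep t u h]
  have hga : g a = 0 := by
    have : S ∩ Set.Iio a = ∅ := by
      ext x
      simp only [Set.mem_inter_iff, Set.mem_Iio, Set.mem_empty_iff_false, iff_false, not_and]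
      intro hx
      exact not_lt.2 (hSb hx).1.le
    simp [hgdef, this]
  have hgb : g b = (volume S).toReal := by
    have : S ∩ Set.Iio b = S := Set.inter_eq_self_of_subset_left (fun x hx => (hSb hx).2)
    simp [hgdef, this]
  have hrne : r ≠ ⊤ := ne_top_of_le_ne_top hfin hr
  have hmem : r.toReal ∈ Set.Icc (g a) (g b) := by
    constructor
    · rw [hga]; exact ENNReal.toReal_nonneg
    · rw [hgb]; exact ENNReal.toReal_mono hfin hr
  obtain ⟨t, _, hgt⟩ := intermediate_value_Icc hab hlip.continuous.continuousOn hmem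
  refine ⟨S ∩ Set.Iio t, Set.inter_subset_left, hS.inter measurableSet_Iio, ?_⟩
  exact (ENNReal.toReal_eq_toReal_iff' (hfin' t) hrne).1 hgt

lemma key (a b α : ℝ) (hα : 0 < α) (B₁ B₂ B₃ : Set ℝ)
    (hB₁ : MeasurableSet B₁) (hB₂ : MeasurableSet B₂) (hB₃ : MeasurableSet B₃)
    (hB₁Ω : B₁ ⊆ Set.Ioo a b) (hB₂Ω : B₂ ⊆ Set.Ioo a b) (hB₃Ω : B₃ ⊆ Set.Ioo a b)
    (hd₁₂ : Disjoint B₁ B₂) (hd₁₃ : Disjoint B₁ B₃) (hd₂₃ : Disjoint B₂ B₃)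
    (hm12 : volume B₁ = volume B₂) (hm13 : volume B₁ = volume B₃) (hpos : 0 < volume B₁)
    (ρ η : ℝ → ℝ)
    (hρ2 : MemLp ρ 2 (volume.restrict (Set.Ioo a b)))
    (hη2 : MemLp η 2 (volume.restrict (Set.Ioo a b)))
    (hρ0 : ∀ᵐ x ∂(volume.restrict (Set.Ioo a b)), 0 ≤ ρ x)
    (hη0 : ∀ᵐ x ∂(volume.restrict (Set.Ioo a b)), 0 ≤ η x)
    (hρα : ∀ᵐ x ∂(volume.restrict B₁), α < ρ x)
    (hηα : ∀ᵐ x ∂(volume.restrict B₂), α < η x)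
    (hvac : ∀ᵐ x ∂(volume.restrict B₃), ρ x = 0 ∧ η x = 0) :
    (∀ ε : ℝ,
      F0 (Set.Ioo a b) (fun x => ρ x - ε * B₁.indicator 1 x + ε * B₃.indicator 1 x)
          (fun x => η x - ε * B₂.indicator 1 x + ε * B₃.indicator 1 x)
        = F0 (Set.Ioo a b) ρ η
          - ε * ((∫ x in B₁, (ρ x + η x)) + ∫ x in B₂, (ρ x + η x))
          + 3 * ε^2 * (volume B₃).toReal) ∧
    (∃ ε₀ : ℝ, 0 < ε₀ ∧ ∀ ε : ℝ, ε ∈ Set.Ioo 0 ε₀ →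
      F0 (Set.Ioo a b) (fun x => ρ x - ε * B₁.indicator 1 x + ε * B₃.indicator 1 x)
          (fun x => η x - ε * B₂.indicator 1 x + ε * B₃.indicator 1 x)
        < F0 (Set.Ioo a b) ρ η) := by
  haveI := finite_restrict a b
  set Ω := Set.Ioo a b with hΩdef
  set s : ℝ → ℝ := fun x => ρ x + η x with hsdef
  set g : ℝ → ℝ := fun x => 2 * B₃.indicator 1 x - B₁.indicator 1 x - B₂.indicator 1 x with hgdef
  -- finiteness of the B's
  have hfin : ∀ (B : Set ℝ), B ⊆ Ω → volume B ≠ ⊤ := fun B hB =>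
    ne_top_of_le_ne_top (by simp [hΩdef, Real.volume_Ioo]) (measure_mono hB)
  -- basic integrability
  have hs2 : MemLp s 2 (volume.restrict Ω) := hρ2.add hη2
  have hsInt : Integrable s (volume.restrict Ω) := hs2.integrable one_le_two
  have hindc : ∀ (B : Set ℝ), MeasurableSet B → Integrable (B.indicator (1 : ℝ → ℝ))
      (volume.restrict Ω) := fun B hB => (integrable_const 1).indicator hB
  have hgm : Measurable g := by
    apply Measurable.sub
    apply Measurable.sub
    · exact (measurable_one.indicator hB₃).const_mul 2
    · exact measurable_one.indicator hB₁
    · exact measurable_one.indicator hB₂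
  have hind01 : ∀ (B : Set ℝ) (x : ℝ), B.indicator (1 : ℝ → ℝ) x = 0 ∨ B.indicator 1 x = 1 := by
    intro B x
    by_cases h : x ∈ B <;> simp [h]
  have hgb : ∀ x, ‖g x‖ ≤ 2 := by
    intro x
    have hgx : g x = 2 * B₃.indicator 1 x - B₁.indicator 1 x - B₂.indicator 1 x := rfl
    rw [hgx, Real.norm_eq_abs, abs_le]
    by_cases h1 : x ∈ B₁ <;> by_cases h2 : x ∈ B₂ <;> by_cases h3 : x ∈ B₃ <;>
      simp [Set.indicator_apply, h1, h2, h3] <;> norm_num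
  have hgInt : Integrable g (volume.restrict Ω) :=
    (((hindc B₃ hB₃).const_mul 2).sub (hindc B₁ hB₁)).sub (hindc B₂ hB₂)
  have I1 : Integrable (fun x => s x ^ 2) (volume.restrict Ω) := hs2.integrable_sq
  have I2 : Integrable (fun x => s x * g x) (volume.restrict Ω) := by
    have := hsInt.bdd_mul hgm.aestronglyMeasurable (Filter.Eventually.of_forall hgb)
    exact this.congr (Filter.Eventually.of_forall fun x => mul_comm _ _)
  have I3 : Integrable (fun x => g x ^ 2) (volume.restrict Ω) := by
    have := hgInt.bdd_mul hgm.aestronglyMeasurable (Filter.Eventually.of_forall hgb)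
    exact this.congr (Filter.Eventually.of_forall fun x => (sq (g x)).symm)
  -- set integrals of indicators
  have hBint : ∀ (B : Set ℝ), MeasurableSet B → B ⊆ Ω →
      ∫ x in Ω, B.indicator s x = ∫ x in B, s x := by
    intro B hB hBΩ
    rw [setIntegral_indicator hB, Set.inter_eq_self_of_subset_right hBΩ]
  have hBintc : ∀ (B : Set ℝ), MeasurableSet B → B ⊆ Ω →
      ∫ x in Ω, B.indicator (1 : ℝ → ℝ) x = (volume B).toReal := by
    intro B hB hBΩ
    rw [setIntegral_indicator hB, Set.inter_eq_self_of_subset_right hBΩ]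
    simp; rfl
  have h3z : ∫ x in B₃, s x = 0 := by
    apply integral_eq_zero_of_ae
    filter_upwards [hvac] with x hx
    simp [hsdef, hx.1, hx.2]
  -- ∫ s g
  have hSG : ∫ x in Ω, s x * g x = -(∫ x in B₁, s x) - ∫ x in B₂, s x := by
    have hp : ∀ x, s x * g x =
        2 * B₃.indicator s x - B₁.indicator s x - B₂.indicator s x := by
      intro x
      show s x * (2 * B₃.indicator 1 x - B₁.indicator 1 x - B₂.indicator 1 x) = _
      by_cases h1 : x ∈ B₁ <;> by_cases h2 : x ∈ B₂ <;> by_cases h3 : x ∈ B₃ <;>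
        simp [Set.indicator_apply, h1, h2, h3] <;> ring
    calc ∫ x in Ω, s x * g x
        = ∫ x in Ω, (2 * B₃.indicator s x - B₁.indicator s x - B₂.indicator s x) :=
          integral_congr_ae (Filter.Eventually.of_forall hp)
      _ = 2 * (∫ x in Ω, B₃.indicator s x) - (∫ x in Ω, B₁.indicator s x)
            - ∫ x in Ω, B₂.indicator s x := by
          have J3 : Integrable (fun x => 2 * B₃.indicator s x) (volume.restrict Ω) :=
            (hsInt.indicator hB₃).const_mul 2
          have J1 : Integrable (fun x => B₁.indicator s x) (volume.restrict Ω) :=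
            hsInt.indicator hB₁
          have J2 : Integrable (fun x => B₂.indicator s x) (volume.restrict Ω) :=
            hsInt.indicator hB₂
          have J31 : Integrable (fun x => 2 * B₃.indicator s x - B₁.indicator s x)
              (volume.restrict Ω) := J3.sub J1
          rw [integral_sub J31 J2, integral_sub J3 J1, integral_const_mul]
      _ = -(∫ x in B₁, s x) - ∫ x in B₂, s x := by
          rw [hBint B₃ hB₃ hB₃Ω, hBint B₁ hB₁ hB₁Ω, hBint B₂ hB₂ hB₂Ω, h3z]
          ring
  -- ∫ g²
  have e2 : (volume B₂).toReal = (volume B₃).toReal := by rw [← hm12, hm13]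
  have e1 : (volume B₁).toReal = (volume B₃).toReal := by rw [hm13]
  have hGG : ∫ x in Ω, g x ^ 2 = 6 * (volume B₃).toReal := by
    have hp : ∀ x, g x ^ 2 =
        B₁.indicator 1 x + B₂.indicator 1 x + 4 * B₃.indicator 1 x := by
      intro x
      show ((2 * B₃.indicator 1 x - B₁.indicator 1 x - B₂.indicator 1 x : ℝ)) ^ 2 = _
      by_cases h1 : x ∈ B₁ <;> by_cases h2 : x ∈ B₂ <;> by_cases h3 : x ∈ B₃
      · exact absurd h2 (Set.disjoint_left.mp hd₁₂ h1)
      · exact absurd h2 (Set.disjoint_left.mp hd₁₂ h1)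
      · exact absurd h3 (Set.disjoint_left.mp hd₁₃ h1)
      · simp [Set.indicator_apply, h1, h2, h3]
      · exact absurd h3 (Set.disjoint_left.mp hd₂₃ h2)
      · simp [Set.indicator_apply, h1, h2, h3]
      · simp [Set.indicator_apply, h1, h2, h3]; ring
      · simp [Set.indicator_apply, h1, h2, h3]
    calc ∫ x in Ω, g x ^ 2
        = ∫ x in Ω, (B₁.indicator 1 x + B₂.indicator 1 x + 4 * B₃.indicator 1 x) :=
          integral_congr_ae (Filter.Eventually.of_forall hp)
      _ = (∫ x in Ω, B₁.indicator (1:ℝ→ℝ) x) + (∫ x in Ω, B₂.indicator (1:ℝ→ℝ) x)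
            + 4 * ∫ x in Ω, B₃.indicator (1:ℝ→ℝ) x := by
          have K1 : Integrable (fun x => B₁.indicator (1:ℝ→ℝ) x) (volume.restrict Ω) :=
            hindc B₁ hB₁
          have K2 : Integrable (fun x => B₂.indicator (1:ℝ→ℝ) x) (volume.restrict Ω) :=
            hindc B₂ hB₂
          have K3 : Integrable (fun x => 4 * B₃.indicator (1:ℝ→ℝ) x) (volume.restrict Ω) :=
            (hindc B₃ hB₃).const_mul 4
          have K12 : Integrable (fun x => B₁.indicator (1:ℝ→ℝ) x + B₂.indicator (1:ℝ→ℝ) x)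
              (volume.restrict Ω) := K1.add K2
          rw [integral_add K12 K3, integral_add K1 K2, integral_const_mul]
      _ = 6 * (volume B₃).toReal := by
          rw [hBintc B₁ hB₁ hB₁Ω, hBintc B₂ hB₂ hB₂Ω, hBintc B₃ hB₃ hB₃Ω, e1, e2]
          ring
  -- the main identity
  have main : ∀ ε : ℝ,
      F0 Ω (fun x => ρ x - ε * B₁.indicator 1 x + ε * B₃.indicator 1 x)
          (fun x => η x - ε * B₂.indicator 1 x + ε * B₃.indicator 1 x)
        = F0 Ω ρ η - ε * ((∫ x in B₁, s x) + ∫ x in B₂, s x)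
          + 3 * ε^2 * (volume B₃).toReal := by
    intro ε
    have hexp : ∫ x in Ω, (s x + ε * g x)^2
        = (∫ x in Ω, s x ^ 2) + 2 * ε * (∫ x in Ω, s x * g x) + ε^2 * ∫ x in Ω, g x ^ 2 := by
      calc ∫ x in Ω, (s x + ε * g x)^2
          = ∫ x in Ω, (s x ^ 2 + ((2 * ε) * (s x * g x) + ε^2 * g x ^ 2)) :=
            integral_congr_ae (Filter.Eventually.of_forall fun x => by ring)
        _ = (∫ x in Ω, s x ^ 2) + ∫ x in Ω, ((2 * ε) * (s x * g x) + ε^2 * g x ^ 2) := by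
            have L2 : Integrable (fun x => (2 * ε) * (s x * g x)) (volume.restrict Ω) :=
              I2.const_mul _
            have L3 : Integrable (fun x => ε^2 * g x ^ 2) (volume.restrict Ω) :=
              I3.const_mul _
            have L23 : Integrable (fun x => (2 * ε) * (s x * g x) + ε^2 * g x ^ 2)
                (volume.restrict Ω) := L2.add L3
            exact integral_add I1 L23
        _ = (∫ x in Ω, s x ^ 2) + 2 * ε * (∫ x in Ω, s x * g x) + ε^2 * ∫ x in Ω, g x ^ 2 := by
            have L2 : Integrable (fun x => (2 * ε) * (s x * g x)) (volume.restrict Ω) :=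
              I2.const_mul _
            have L3 : Integrable (fun x => ε^2 * g x ^ 2) (volume.restrict Ω) :=
              I3.const_mul _
            rw [integral_add L2 L3, integral_const_mul, integral_const_mul]
            ring
    have hL : F0 Ω (fun x => ρ x - ε * B₁.indicator 1 x + ε * B₃.indicator 1 x)
        (fun x => η x - ε * B₂.indicator 1 x + ε * B₃.indicator 1 x)
        = (1/2) * ∫ x in Ω, (s x + ε * g x)^2 := by
      show (1/2) * ∫ x in Ω, _ = _
      congr 1
      apply integral_congr_ae
      filter_upwards with x
      simp only [hsdef, hgdef]
      ring
    have hR : F0 Ω ρ η = (1/2) * ∫ x in Ω, s x ^ 2 := rfl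
    rw [hL, hexp, hR, hSG, hGG]
    ring
  refine ⟨main, ?_⟩
  -- strict decrease for small ε
  have hμ3 : 0 < (volume B₃).toReal :=
    ENNReal.toReal_pos (by rw [← hm13]; exact hpos.ne') (hfin B₃ hB₃Ω)
  have hc₁ : α * (volume B₃).toReal ≤ ∫ x in B₁, s x := by
    have hae : ∀ᵐ x ∂(volume.restrict B₁), α ≤ s x := by
      filter_upwards [hρα, ae_restrict_of_ae_restrict_of_subset hB₁Ω hη0] with x h1 h2
      simp only [hsdef]; linarith
    have := integral_mono_ae (integrableOn_const (C := α) (hfin B₁ hB₁Ω))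
      (hsInt.mono_measure (Measure.restrict_mono hB₁Ω le_rfl)) hae
    rw [setIntegral_const] at this
    calc α * (volume B₃).toReal = (volume B₁).toReal • α := by rw [e1, smul_eq_mul]; ring
      _ ≤ _ := this
  have hc₂ : α * (volume B₃).toReal ≤ ∫ x in B₂, s x := by
    have hae : ∀ᵐ x ∂(volume.restrict B₂), α ≤ s x := by
      filter_upwards [hηα, ae_restrict_of_ae_restrict_of_subset hB₂Ω hρ0] with x h1 h2
      simp only [hsdef]; linarith
    have := integral_mono_ae (integrableOn_const (C := α) (hfin B₂ hB₂Ω))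
      (hsInt.mono_measure (Measure.restrict_mono hB₂Ω le_rfl)) hae
    rw [setIntegral_const] at this
    calc α * (volume B₃).toReal = (volume B₂).toReal • α := by rw [e2, smul_eq_mul]; ring
      _ ≤ _ := this
  set c : ℝ := (∫ x in B₁, s x) + ∫ x in B₂, s x with hcdef
  have hcpos : 0 < c := by
    have : 0 < α * (volume B₃).toReal := mul_pos hα hμ3
    simp only [hcdef]; linarith
  refine ⟨c / (3 * (volume B₃).toReal), div_pos hcpos (by linarith), ?_⟩
  intro ε hε
  obtain ⟨hε0, hεlt⟩ := hε
  rw [main ε]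
  have h3 : 3 * ε * (volume B₃).toReal < c := by
    have := (lt_div_iff₀ (by linarith : (0:ℝ) < 3 * (volume B₃).toReal)).1 hεlt
    nlinarith
  nlinarith

/-- Perturbing a single density keeps it admissible. -/
lemma perturb_one (a b α ε : ℝ) (hε : 0 < ε) (hεα : ε < α) (B B' : Set ℝ)
    (hB : MeasurableSet B) (hB' : MeasurableSet B')
    (hBΩ : B ⊆ Set.Ioo a b) (hB'Ω : B' ⊆ Set.Ioo a b)
    (hd : Disjoint B B') (hm : volume B = volume B')
    (ρ : ℝ → ℝ) (hρ2 : MemLp ρ 2 (volume.restrict (Set.Ioo a b)))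
    (hρ0 : ∀ᵐ x ∂(volume.restrict (Set.Ioo a b)), 0 ≤ ρ x)
    (hρα : ∀ᵐ x ∂(volume.restrict B), α < ρ x) :
    MemLp (fun x => ρ x - ε * B.indicator 1 x + ε * B'.indicator 1 x) 2
      (volume.restrict (Set.Ioo a b)) ∧
    (∀ᵐ x ∂(volume.restrict (Set.Ioo a b)),
      0 ≤ ρ x - ε * B.indicator 1 x + ε * B'.indicator 1 x) ∧
    (∫ x in Set.Ioo a b, (ρ x - ε * B.indicator 1 x + ε * B'.indicator 1 x))
      = ∫ x in Set.Ioo a b, ρ x := by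
  haveI := finite_restrict a b
  have hρInt : Integrable ρ (volume.restrict (Set.Ioo a b)) := hρ2.integrable one_le_two
  have hind : ∀ (C : Set ℝ), MeasurableSet C →
      MemLp (fun x => ε * C.indicator (1:ℝ→ℝ) x) 2 (volume.restrict (Set.Ioo a b)) := by
    intro C hC
    exact (memLp_indicator_const 2 hC (1:ℝ) (Or.inr (measure_ne_top _ _))).const_mul ε
  have hindI : ∀ (C : Set ℝ), MeasurableSet C →
      Integrable (fun x => ε * C.indicator (1:ℝ→ℝ) x) (volume.restrict (Set.Ioo a b)) :=
    fun C hC => (hind C hC).integrable one_le_two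
  refine ⟨?_, ?_, ?_⟩
  · exact (hρ2.sub (hind B hB)).add (hind B' hB')
  · have hB_ae : ∀ᵐ x ∂(volume.restrict (Set.Ioo a b)), x ∈ B → α < ρ x :=
      ae_restrict_of_ae ((ae_restrict_iff' hB).1 hρα)
    filter_upwards [hρ0, hB_ae] with x h0 hBx
    by_cases hxB : x ∈ B
    · have hxB' : x ∉ B' := Set.disjoint_left.mp hd hxB
      simp only [Set.indicator_of_mem hxB, Set.indicator_of_notMem hxB', Pi.one_apply]
      have := hBx hxB
      nlinarith
    · by_cases hxB' : x ∈ B' <;>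
        simp only [Set.indicator_of_mem, Set.indicator_of_notMem, hxB, hxB',
          not_false_iff, Pi.one_apply] <;> nlinarith
  · have hval : ∀ (C : Set ℝ), MeasurableSet C → C ⊆ Set.Ioo a b →
        ∫ x in Set.Ioo a b, C.indicator (1:ℝ→ℝ) x = (volume C).toReal := by
      intro C hC hCΩ
      rw [setIntegral_indicator hC, Set.inter_eq_self_of_subset_right hCΩ]
      simp; rfl
    have S1 : Integrable (fun x => ρ x - ε * B.indicator (1:ℝ→ℝ) x)
        (volume.restrict (Set.Ioo a b)) := hρInt.sub (hindI B hB)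
    rw [integral_add S1 (hindI B' hB'), integral_sub hρInt (hindI B hB),
      integral_const_mul, integral_const_mul, hval B hB hBΩ, hval B' hB' hB'Ω, hm]
    ring

/-- A nonnegative function with positive integral has a superlevel set of
positive measure (stated for a measurable representative). -/
lemma exists_level (a b m : ℝ) (hm : 0 < m) (f f' : ℝ → ℝ)
    (hf' : Measurable f') (hff' : f =ᵐ[volume.restrict (Set.Ioo a b)] f')
    (hf0 : ∀ᵐ x ∂(volume.restrict (Set.Ioo a b)), 0 ≤ f x)
    (hint : ∫ x in Set.Ioo a b, f x = m) :
    ∃ α : ℝ, 0 < α ∧ 0 < volume {x ∈ Set.Ioo a b | α < f' x} := by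
  by_contra hcon
  push_neg at hcon
  have hnull : ∀ n : ℕ, volume {x ∈ Set.Ioo a b | 1/((n:ℝ)+1) < f' x} = 0 := by
    intro n
    have h1 : (0:ℝ) < 1/((n:ℝ)+1) := by positivity
    exact le_antisymm (hcon _ h1) zero_le
  have hU : volume {x ∈ Set.Ioo a b | 0 < f' x} = 0 := by
    have hsub : {x ∈ Set.Ioo a b | 0 < f' x}
        ⊆ ⋃ n : ℕ, {x ∈ Set.Ioo a b | 1/((n:ℝ)+1) < f' x} := by
      rintro x ⟨hxΩ, hx⟩
      obtain ⟨n, hn⟩ := exists_nat_one_div_lt hx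
      exact Set.mem_iUnion.2 ⟨n, hxΩ, hn⟩
    refine le_antisymm ((measure_mono hsub).trans ?_) zero_le
    rw [measure_iUnion_null hnull]
  have hle : ∀ᵐ x ∂(volume.restrict (Set.Ioo a b)), f' x ≤ 0 := by
    rw [ae_iff]
    rw [Measure.restrict_apply' measurableSet_Ioo]
    refine le_antisymm (le_trans (measure_mono ?_) hU.le) zero_le
    rintro x ⟨hx, hxΩ⟩
    exact ⟨hxΩ, not_le.1 hx⟩
  have hzero : f =ᵐ[volume.restrict (Set.Ioo a b)] 0 := by
    filter_upwards [hff', hf0, hle] with x h1 h2 h3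
    have : f x ≤ 0 := h1 ▸ h3
    simpa using le_antisymm this h2
  rw [integral_congr_ae hzero] at hint
  simp at hint
  exact absurd hint.symm (ne_of_gt hm)

/-- Moving mass into a vacuum region strictly decreases the δ = 0 energy: the stated
identity holds, the energy strictly decreases for small ε, and consequently any
minimiser of F over X has no vacuum: supp(ρ) ∪ supp(η) = Ω up to a null set. -/
theorem stmt19 (a b m₁ m₂ Cb α : ℝ) (hab : a < b) (hm₁ : 0 < m₁) (hm₂ : 0 < m₂)
    (hα : 0 < α) (B₁ B₂ B₃ : Set ℝ)
    (hB₁ : MeasurableSet B₁) (hB₂ : MeasurableSet B₂) (hB₃ : MeasurableSet B₃)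
    (hB₁Ω : B₁ ⊆ Set.Ioo a b) (hB₂Ω : B₂ ⊆ Set.Ioo a b) (hB₃Ω : B₃ ⊆ Set.Ioo a b)
    (hd₁₂ : Disjoint B₁ B₂) (hd₁₃ : Disjoint B₁ B₃) (hd₂₃ : Disjoint B₂ B₃)
    (hm12 : volume B₁ = volume B₂) (hm13 : volume B₁ = volume B₃) (hpos : 0 < volume B₁)
    (ρ η : ℝ → ℝ) (hX : InX (Set.Ioo a b) m₁ m₂ ρ η)
    (hbd : ∀ᵐ x ∂(volume.restrict (Set.Ioo a b)), ρ x ≤ Cb ∧ η x ≤ Cb)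
    (hρα : ∀ᵐ x ∂(volume.restrict B₁), α < ρ x)
    (hηα : ∀ᵐ x ∂(volume.restrict B₂), α < η x)
    (hvac : ∀ᵐ x ∂(volume.restrict B₃), ρ x = 0 ∧ η x = 0) :
    (∀ ε : ℝ, ε ∈ Set.Ioo 0 α →
      F0 (Set.Ioo a b) (fun x => ρ x - ε * B₁.indicator 1 x + ε * B₃.indicator 1 x)
          (fun x => η x - ε * B₂.indicator 1 x + ε * B₃.indicator 1 x)
        = F0 (Set.Ioo a b) ρ η
          - ε * ((∫ x in B₁, (ρ x + η x)) + ∫ x in B₂, (ρ x + η x))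
          + 3 * ε^2 * (volume B₃).toReal) ∧
    (∃ ε₀ : ℝ, 0 < ε₀ ∧ ∀ ε : ℝ, ε ∈ Set.Ioo 0 ε₀ → ε < α →
      F0 (Set.Ioo a b) (fun x => ρ x - ε * B₁.indicator 1 x + ε * B₃.indicator 1 x)
          (fun x => η x - ε * B₂.indicator 1 x + ε * B₃.indicator 1 x)
        < F0 (Set.Ioo a b) ρ η) ∧
    (∀ σ τ : ℝ → ℝ, InX (Set.Ioo a b) m₁ m₂ σ τ →
      (∀ σ' τ' : ℝ → ℝ, InX (Set.Ioo a b) m₁ m₂ σ' τ' →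
        F0 (Set.Ioo a b) σ τ ≤ F0 (Set.Ioo a b) σ' τ') →
      volume {x ∈ Set.Ioo a b | σ x = 0 ∧ τ x = 0} = 0) := by
  obtain ⟨hρ2, hη2, hρ0, hη0, hρm, hηm⟩ := hX
  obtain ⟨hid, hdec⟩ := key a b α hα B₁ B₂ B₃ hB₁ hB₂ hB₃ hB₁Ω hB₂Ω hB₃Ω hd₁₂ hd₁₃ hd₂₃
    hm12 hm13 hpos ρ η hρ2 hη2 hρ0 hη0 hρα hηα hvac
  refine ⟨fun ε _ => hid ε, ?_, ?_⟩
  · obtain ⟨ε₀, hε₀, hd'⟩ := hdec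
    exact ⟨ε₀, hε₀, fun ε hε _ => hd' ε hε⟩
  -- Part 3: minimisers have no vacuum
  intro σ τ hXστ hmin
  by_contra hV0
  haveI := finite_restrict a b
  obtain ⟨hσ2, hτ2, hσ0, hτ0, hσm, hτm⟩ := hXστ
  -- measurable representatives
  set σ' : ℝ → ℝ := hσ2.1.mk σ with hσ'def
  set τ' : ℝ → ℝ := hτ2.1.mk τ with hτ'def
  have hσ'meas : Measurable σ' := hσ2.1.stronglyMeasurable_mk.measurable
  have hτ'meas : Measurable τ' := hτ2.1.stronglyMeasurable_mk.measurable
  have hσeq : σ =ᵐ[volume.restrict (Set.Ioo a b)] σ' := hσ2.1.ae_eq_mk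
  have hτeq : τ =ᵐ[volume.restrict (Set.Ioo a b)] τ' := hτ2.1.ae_eq_mk
  -- the measurable vacuum set has positive measure
  set V' : Set ℝ := {x ∈ Set.Ioo a b | σ' x = 0 ∧ τ' x = 0} with hV'def
  have hV'meas : MeasurableSet V' := by
    have : V' = Set.Ioo a b ∩ (σ' ⁻¹' {0} ∩ τ' ⁻¹' {0}) := by
      ext x; simp [hV'def, Set.mem_setOf_eq, and_assoc]
    rw [this]
    exact measurableSet_Ioo.inter ((hσ'meas (measurableSet_singleton 0)).inter
      (hτ'meas (measurableSet_singleton 0)))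
  have hV'sub : V' ⊆ Set.Ioo a b := fun x hx => hx.1
  have hV'pos : 0 < volume V' := by
    rcases eq_or_lt_of_le ((zero_le : (0:ℝ≥0∞) ≤ volume V')) with h | h
    · exfalso
      apply hV0
      have hNσ : volume ({x | σ x ≠ σ' x} ∩ Set.Ioo a b) = 0 := by
        have := hσeq
        rw [Filter.EventuallyEq, ae_iff, Measure.restrict_apply' measurableSet_Ioo] at this
        exact this
      have hNτ : volume ({x | τ x ≠ τ' x} ∩ Set.Ioo a b) = 0 := by
        have := hτeq
        rw [Filter.EventuallyEq, ae_iff, Measure.restrict_apply' measurableSet_Ioo] at this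
        exact this
      have hsub : {x ∈ Set.Ioo a b | σ x = 0 ∧ τ x = 0}
          ⊆ V' ∪ (({x | σ x ≠ σ' x} ∩ Set.Ioo a b) ∪ ({x | τ x ≠ τ' x} ∩ Set.Ioo a b)) := by
        rintro x ⟨hxΩ, h0σ, h0τ⟩
        by_cases e1 : σ x = σ' x
        · by_cases e2 : τ x = τ' x
          · exact Or.inl ⟨hxΩ, e1 ▸ h0σ, e2 ▸ h0τ⟩
          · exact Or.inr (Or.inr ⟨e2, hxΩ⟩)
        · exact Or.inr (Or.inl ⟨e1, hxΩ⟩)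
      refine le_antisymm ((measure_mono hsub).trans ?_) zero_le
      calc volume (V' ∪ (({x | σ x ≠ σ' x} ∩ Set.Ioo a b) ∪ ({x | τ x ≠ τ' x} ∩ Set.Ioo a b)))
          ≤ volume V' + volume (({x | σ x ≠ σ' x} ∩ Set.Ioo a b)
              ∪ ({x | τ x ≠ τ' x} ∩ Set.Ioo a b)) := measure_union_le _ _
        _ ≤ volume V' + (volume ({x | σ x ≠ σ' x} ∩ Set.Ioo a b)
              + volume ({x | τ x ≠ τ' x} ∩ Set.Ioo a b)) := by
            gcongr
            exact measure_union_le _ _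
        _ = 0 := by rw [← h, hNσ, hNτ]; simp
    · exact h
  -- superlevel sets of positive measure
  obtain ⟨α₁, hα₁, hA₁pos⟩ := exists_level a b m₁ hm₁ σ σ' hσ'meas hσeq hσ0 hσm
  obtain ⟨α₂, hα₂, hA₂pos⟩ := exists_level a b m₂ hm₂ τ τ' hτ'meas hτeq hτ0 hτm
  set α' : ℝ := min α₁ α₂ with hα'def
  have hα'pos : 0 < α' := lt_min hα₁ hα₂
  set A₁ : Set ℝ := {x ∈ Set.Ioo a b | α' < σ' x} with hA₁def
  set A₂ : Set ℝ := {x ∈ Set.Ioo a b | α' < τ' x} with hA₂def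
  have hA₁meas : MeasurableSet A₁ := by
    have : A₁ = Set.Ioo a b ∩ (σ' ⁻¹' Set.Ioi α') := by
      ext x; simp [hA₁def]
    rw [this]; exact measurableSet_Ioo.inter (hσ'meas measurableSet_Ioi)
  have hA₂meas : MeasurableSet A₂ := by
    have : A₂ = Set.Ioo a b ∩ (τ' ⁻¹' Set.Ioi α') := by
      ext x; simp [hA₂def]
    rw [this]; exact measurableSet_Ioo.inter (hτ'meas measurableSet_Ioi)
  have hA₁sub : A₁ ⊆ Set.Ioo a b := fun x hx => hx.1
  have hA₂sub : A₂ ⊆ Set.Ioo a b := fun x hx => hx.1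
  have hA₁pos' : 0 < volume A₁ := by
    refine lt_of_lt_of_le hA₁pos (measure_mono ?_)
    rintro x ⟨hxΩ, hx⟩
    exact ⟨hxΩ, lt_of_le_of_lt (min_le_left _ _) hx⟩
  have hA₂pos' : 0 < volume A₂ := by
    refine lt_of_lt_of_le hA₂pos (measure_mono ?_)
    rintro x ⟨hxΩ, hx⟩
    exact ⟨hxΩ, lt_of_le_of_lt (min_le_right _ _) hx⟩
  -- choose disjoint subsets of equal measure
  set t : ℝ≥0∞ := min (min (volume A₁) (volume A₂)) (volume V') with htdef
  have ht0 : t ≠ 0 := (lt_min (lt_min hA₁pos' hA₂pos') hV'pos).ne'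
  have httop : t ≠ ⊤ := by
    refine ne_top_of_le_ne_top (vol_Ioo_lt_top a b).ne ?_
    exact le_trans (min_le_right _ _) (measure_mono hV'sub)
  set r : ℝ≥0∞ := t / 2 with hrdef
  have hrpos : 0 < r := ENNReal.half_pos ht0
  have hrt : r ≤ t := ENNReal.half_le_self
  have htA₁ : t ≤ volume A₁ := le_trans (min_le_left _ _) (min_le_left _ _)
  have htA₂ : t ≤ volume A₂ := le_trans (min_le_left _ _) (min_le_right _ _)
  have htV : t ≤ volume V' := min_le_right _ _
  obtain ⟨C₁, hC₁sub, hC₁meas, hC₁vol⟩ :=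
    exists_subset_volume_eq hA₁meas hA₁sub hab.le (hrt.trans htA₁)
  have hrA₂C₁ : r ≤ volume (A₂ \ C₁) := by
    calc r = t - t / 2 := (ENNReal.sub_half httop).symm
      _ ≤ volume A₂ - volume C₁ := by
          rw [hC₁vol]
          exact tsub_le_tsub htA₂ le_rfl
      _ ≤ volume (A₂ \ C₁) := le_measure_diff
  obtain ⟨C₂, hC₂sub, hC₂meas, hC₂vol⟩ :=
    exists_subset_volume_eq (hA₂meas.diff hC₁meas)
      (Set.diff_subset.trans hA₂sub) hab.le hrA₂C₁
  obtain ⟨C₃, hC₃sub, hC₃meas, hC₃vol⟩ :=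
    exists_subset_volume_eq hV'meas hV'sub hab.le (hrt.trans htV)
  have hC₁A : C₁ ⊆ A₁ := hC₁sub
  have hC₂A : C₂ ⊆ A₂ := fun x hx => (hC₂sub hx).1
  have hC₁Ω : C₁ ⊆ Set.Ioo a b := hC₁A.trans hA₁sub
  have hC₂Ω : C₂ ⊆ Set.Ioo a b := hC₂A.trans hA₂sub
  have hC₃Ω : C₃ ⊆ Set.Ioo a b := hC₃sub.trans hV'sub
  have hd12' : Disjoint C₁ C₂ := by
    rw [Set.disjoint_left]
    intro x hx1 hx2
    exact (hC₂sub hx2).2 hx1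
  have hd13' : Disjoint C₁ C₃ := by
    rw [Set.disjoint_left]
    intro x hx1 hx3
    have h1 : α' < σ' x := (hC₁A hx1).2
    have h2 : σ' x = 0 := (hC₃sub hx3).2.1
    rw [h2] at h1
    exact absurd h1 (not_lt.2 hα'pos.le)
  have hd23' : Disjoint C₂ C₃ := by
    rw [Set.disjoint_left]
    intro x hx2 hx3
    have h1 : α' < τ' x := (hC₂A hx2).2
    have h2 : τ' x = 0 := (hC₃sub hx3).2.2
    rw [h2] at h1
    exact absurd h1 (not_lt.2 hα'pos.le)
  have hv12 : volume C₁ = volume C₂ := by rw [hC₁vol, hC₂vol]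
  have hv13 : volume C₁ = volume C₃ := by rw [hC₁vol, hC₃vol]
  have hvpos : 0 < volume C₁ := by rw [hC₁vol]; exact hrpos
  -- a.e. hypotheses for σ, τ on the C's
  have hσα' : ∀ᵐ x ∂(volume.restrict C₁), α' < σ x := by
    filter_upwards [ae_restrict_of_ae_restrict_of_subset hC₁Ω hσeq,
      ae_restrict_mem hC₁meas] with x hx hmem
    rw [hx]
    exact (hC₁A hmem).2
  have hτα' : ∀ᵐ x ∂(volume.restrict C₂), α' < τ x := by
    filter_upwards [ae_restrict_of_ae_restrict_of_subset hC₂Ω hτeq,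
      ae_restrict_mem hC₂meas] with x hx hmem
    rw [hx]
    exact (hC₂A hmem).2
  have hvac' : ∀ᵐ x ∂(volume.restrict C₃), σ x = 0 ∧ τ x = 0 := by
    filter_upwards [ae_restrict_of_ae_restrict_of_subset hC₃Ω hσeq,
      ae_restrict_of_ae_restrict_of_subset hC₃Ω hτeq,
      ae_restrict_mem hC₃meas] with x h1 h2 hmem
    refine ⟨?_, ?_⟩
    · rw [h1]; exact (hC₃sub hmem).2.1
    · rw [h2]; exact (hC₃sub hmem).2.2
  -- strict decrease from the key lemma
  obtain ⟨-, ε₀, hε₀pos, hdec'⟩ := key a b α' hα'pos C₁ C₂ C₃ hC₁meas hC₂meas hC₃meas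
    hC₁Ω hC₂Ω hC₃Ω hd12' hd13' hd23' hv12 hv13 hvpos σ τ hσ2 hτ2 hσ0 hτ0 hσα' hτα' hvac'
  set ε : ℝ := min ε₀ α' / 2 with hεdef
  have hεpos : 0 < ε := by
    have := lt_min hε₀pos hα'pos
    positivity
  have hεε₀ : ε < ε₀ :=
    lt_of_lt_of_le (half_lt_self (lt_min hε₀pos hα'pos)) (min_le_left _ _)
  have hεα' : ε < α' :=
    lt_of_lt_of_le (half_lt_self (lt_min hε₀pos hα'pos)) (min_le_right _ _)
  have hlt := hdec' ε ⟨hεpos, hεε₀⟩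
  -- the perturbed pair is admissible
  obtain ⟨hM1, hN1, hI1⟩ := perturb_one a b α' ε hεpos hεα' C₁ C₃ hC₁meas hC₃meas
    hC₁Ω hC₃Ω hd13' hv13 σ hσ2 hσ0 hσα'
  obtain ⟨hM2, hN2, hI2⟩ := perturb_one a b α' ε hεpos hεα' C₂ C₃ hC₂meas hC₃meas
    hC₂Ω hC₃Ω hd23' (hv12 ▸ hv13) τ hτ2 hτ0 hτα'
  have hXε : InX (Set.Ioo a b) m₁ m₂
      (fun x => σ x - ε * C₁.indicator 1 x + ε * C₃.indicator 1 x)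
      (fun x => τ x - ε * C₂.indicator 1 x + ε * C₃.indicator 1 x) :=
    ⟨hM1, hM2, hN1, hN2, by rw [hI1]; exact hσm, by rw [hI2]; exact hτm⟩
  have := hmin _ _ hXε
  linarith
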